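/- Let S be a finite inverse semigroup and a, b ∈ S. Then the conditions a ∼ b, a ≈ b, and a ≡ b are all equivalent. -/

import Mathlib

namespace SgConjPaper

/-- `spow x n = x^(n+1)`: positive powers of an element of a semigroup. -/
def spow {S : Type*} [Semigroup S] (x : S) : ℕ → S
  | 0 => x
  | n + 1 => spow x n * x

/-- `a` lies in the maximal subgroup of `S` whose identity is the idempotent
`e` (i.e. `e` is a two-sided identity for `a` and `a` is invertible over `e`). -/
def InMaxSubgroup {S : Type*} [Semigroup S] (e a : S) : Prop :=
  e * a = a ∧ a * e = a ∧ ∃ b : S, e * b = b ∧ b * e = b ∧ a * b = e ∧ b * a = e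

/-- `e` is the idempotent `e_x`: the identity of the maximal subgroup
containing some positive power of `x`. -/
def IsEIdem {S : Type*} [Semigroup S] (x e : S) : Prop :=
  ∃ k : ℕ, InMaxSubgroup e (spow x k)

/-- A semigroup is group-bound if some positive power of every element lies
in a subgroup. -/
def GroupBound (S : Type*) [Semigroup S] : Prop := ∀ x : S, ∃ e : S, IsEIdem x e

/-- Primary conjugacy: `x = uv`, `y = vu` for some `u, v ∈ S¹`. -/
def PrimConj {S : Type*} [Semigroup S] (x y : S) : Prop :=
  ∃ u v : WithOne S, (x : WithOne S) = u * v ∧ (y : WithOne S) = v * u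

/-- Conjugacy `∼`: the transitive closure of primary conjugacy. -/
def SgConj {S : Type*} [Semigroup S] : S → S → Prop := Relation.TransGen PrimConj

/-- Conjugacy in the character sense `≡`: equal traces under every
finite-dimensional complex representation. -/
def CharEq {S : Type*} [Semigroup S] (x y : S) : Prop :=
  ∀ (V : Type) (_ : AddCommGroup V) (_ : Module ℂ V) (_ : FiniteDimensional ℂ V)
    (φ : S →ₙ* Module.End ℂ V),
    LinearMap.trace ℂ V (φ x) = LinearMap.trace ℂ V (φ y)

/-- A semigroup is regular if for every `a` there is `b` with `a = aba`. -/
def Regular (S : Type*) [Semigroup S] : Prop := ∀ a : S, ∃ b : S, a * b * a = a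

/-- `inv` makes `S` an inverse semigroup: `inv a` is the unique inverse of
each element `a`. -/
def IsInverseSemigroup (S : Type*) [Semigroup S] (inv : S → S) : Prop :=
  (∀ a : S, a * inv a * a = a) ∧ (∀ a : S, inv a * a * inv a = inv a) ∧
  (∀ a b : S, a * b * a = a → b * a * b = b → b = inv a)

open Classical in
/-- Extension of the inverse map to `S¹ = WithOne S` (with `1⁻¹ = 1`). -/
noncomputable def inv₁ {S : Type*} [Semigroup S] (inv : S → S) (a : WithOne S) :
    WithOne S :=
  if h : a = 1 then 1 else ((inv (WithOne.unone h) : S) : WithOne S)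

/-- The natural partial order on `S¹`: `a ≥ b` iff `b = a e` for some
idempotent `e`. -/
def NatGe {S : Type*} [Semigroup S] (a b : WithOne S) : Prop :=
  ∃ f : WithOne S, f * f = f ∧ b = a * f

/-- The partial action of `S¹` on `S`: `ActsTo inv a x y` says that `a · x` is
defined (i.e. `a⁻¹ a ≥ e_x`) and that its value `a x a⁻¹` equals `y`. -/
def ActsTo {S : Type*} [Semigroup S] (inv : S → S) (a : WithOne S) (x y : S) : Prop :=
  (∃ e : S, IsEIdem x e ∧ NatGe (inv₁ inv a * a) (e : WithOne S)) ∧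
  (y : WithOne S) = a * (x : WithOne S) * inv₁ inv a

/-- `x ≈_p y`: `y = a · x` or `x = a · y` for some `a ∈ S¹`. -/
def ActConjP {S : Type*} [Semigroup S] (inv : S → S) (x y : S) : Prop :=
  ∃ a : WithOne S, ActsTo inv a x y ∨ ActsTo inv a y x

/-- `≈`, conjugacy in the action sense: the transitive closure of `≈_p`. -/
def ActConj {S : Type*} [Semigroup S] (inv : S → S) : S → S → Prop :=
  Relation.TransGen (ActConjP inv)

section Basics

variable {S : Type*} [Semigroup S] {inv : S → S} (h : IsInverseSemigroup S inv)
include h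

lemma i1 (a : S) : a * inv a * a = a := h.1 a
lemma i2 (a : S) : inv a * a * inv a = inv a := h.2.1 a
lemma iu {a b : S} (h1 : a * b * a = a) (h2 : b * a * b = b) : b = inv a := h.2.2 a b h1 h2

lemma inv_inv (a : S) : inv (inv a) = a := (iu h (i2 h a) (i1 h a)).symm

lemma inv_idem {e : S} (he : e * e = e) : inv e = e := by
  have := iu h (a := e) (b := e) (by rw [he, he]) (by rw [he, he])
  exact this.symm

lemma mul_inv_idem (a : S) : (a * inv a) * (a * inv a) = a * inv a := by
  have : a * inv a * a * inv a = a * inv a := by rw [i1 h a]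
  simpa [mul_assoc] using this

lemma inv_mul_idem (a : S) : (inv a * a) * (inv a * a) = inv a * a := by
  have : inv a * a * inv a * a = inv a * a := by rw [i2 h a]
  simpa [mul_assoc] using this

/-- idempotents multiply to idempotents -/
lemma idem_mul_idem {e f : S} (he : e * e = e) (hf : f * f = f) :
    (e * f) * (e * f) = e * f := by
  -- step 1 : (f * x * e) is an inverse of (e*f), where x = inv (e*f)
  set x := inv (e * f) with hx
  have hxe : x * (e * f) * x = x := i2 h (e * f)
  have hefx : (e * f) * x * (e * f) = e * f := i1 h (e * f)
  have h1 : (e * f) * (f * x * e) * (e * f) = e * f := by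
    have : (e * f) * (f * x * e) * (e * f) = e * ((f * f) * x * (e * e)) * f := by
      simp only [mul_assoc]
    rw [this, he, hf]
    have : e * (f * x * e) * f = (e * f) * x * (e * f) := by simp only [mul_assoc]
    rw [this, hefx]
  have h2 : (f * x * e) * (e * f) * (f * x * e) = f * x * e := by
    have : (f * x * e) * (e * f) * (f * x * e) = f * (x * ((e * e) * (f * f)) * x) * e := by
      simp only [mul_assoc]
    rw [this, he, hf]
    have : f * (x * (e * f) * x) * e = f * x * e := by rw [hxe]
    simpa [mul_assoc] using this
  have hinvef : f * x * e = x := hx ▸ iu h h1 h2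
  -- step 2 : x is idempotent
  have hxid : x * x = x := by
    conv_lhs => rw [← hinvef]
    have : (f * x * e) * (f * x * e) = f * (x * (e * f) * x) * e := by simp only [mul_assoc]
    rw [this, hxe, hinvef]
  -- step 3 : e*f = inv x = x, idempotent
  have hefx2 : e * f = x := by
    conv_lhs => rw [← inv_inv h (e * f)]
    rw [← hx, inv_idem h hxid]
  rw [hefx2, hxid]

lemma idem_comm {e f : S} (he : e * e = e) (hf : f * f = f) : e * f = f * e := by
  have h1 : (e * f) * (e * f) = e * f := idem_mul_idem h he hf
  have h2 : (f * e) * (f * e) = f * e := idem_mul_idem h hf he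
  -- f*e is an inverse of e*f
  have ha : (e * f) * (f * e) * (e * f) = e * f := by
    have : (e * f) * (f * e) * (e * f) = e * (f * f) * (e * e) * f := by simp only [mul_assoc]
    rw [this, hf, he]
    have : e * f * (e * f) = e * f := h1
    simpa [mul_assoc] using this
  have hb : (f * e) * (e * f) * (f * e) = f * e := by
    have : (f * e) * (e * f) * (f * e) = f * (e * e) * (f * f) * e := by simp only [mul_assoc]
    rw [this, he, hf]
    have : f * e * (f * e) = f * e := h2
    simpa [mul_assoc] using this
  have : f * e = inv (e * f) := iu h ha hb
  rw [this, inv_idem h h1]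

lemma inv_mul (a b : S) : inv (a * b) = inv b * inv a := by
  have ha : (a * b) * (inv b * inv a) * (a * b) = a * b := by
    have comm : (b * inv b) * (inv a * a) = (inv a * a) * (b * inv b) :=
      idem_comm h (mul_inv_idem h b) (inv_mul_idem h a)
    calc (a * b) * (inv b * inv a) * (a * b)
        = a * ((b * inv b) * (inv a * a)) * b := by simp only [mul_assoc]
      _ = a * ((inv a * a) * (b * inv b)) * b := by rw [comm]
      _ = (a * inv a * a) * (b * inv b * b) := by simp only [mul_assoc]
      _ = a * b := by rw [i1 h a, i1 h b]
  have hb : (inv b * inv a) * (a * b) * (inv b * inv a) = inv b * inv a := by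
    have comm : (inv a * a) * (b * inv b) = (b * inv b) * (inv a * a) :=
      idem_comm h (inv_mul_idem h a) (mul_inv_idem h b)
    calc (inv b * inv a) * (a * b) * (inv b * inv a)
        = inv b * ((inv a * a) * (b * inv b)) * inv a := by simp only [mul_assoc]
      _ = inv b * ((b * inv b) * (inv a * a)) * inv a := by rw [comm]
      _ = (inv b * b * inv b) * (inv a * a * inv a) := by simp only [mul_assoc]
      _ = inv b * inv a := by rw [i2 h b, i2 h a]
  exact (iu h ha hb).symm

end Basics


/-- natural partial order on an inverse semigroup -/
def Nle {S : Type*} [Semigroup S] (a b : S) : Prop := ∃ e, e * e = e ∧ a = b * e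

section Order

variable {S : Type*} [Semigroup S] {inv : S → S} (h : IsInverseSemigroup S inv)
include h

lemma nle_alt {a b : S} : Nle a b ↔ ∃ f : S, f * f = f ∧ a = f * b := by
  constructor
  · rintro ⟨e, he, rfl⟩
    refine ⟨(b * e) * inv (b * e), mul_inv_idem h _, ?_⟩
    have hinv : inv (b * e) = e * inv b := by rw [inv_mul h, inv_idem h he]
    rw [hinv]
    have comm : e * (inv b * b) = (inv b * b) * e := idem_comm h he (inv_mul_idem h b)
    calc b * e = (b * inv b * b) * e := by rw [i1 h b]
      _ = b * ((inv b * b) * e) := by simp only [mul_assoc]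
      _ = b * (e * (inv b * b)) := by rw [comm]
      _ = b * ((e * e) * (inv b * b)) := by rw [he]
      _ = b * e * (e * inv b) * b := by simp only [mul_assoc]
  · rintro ⟨f, hf, rfl⟩
    refine ⟨inv (f * b) * (f * b), inv_mul_idem h _, ?_⟩
    have hinv : inv (f * b) = inv b * f := by rw [inv_mul h, inv_idem h hf]
    rw [hinv]
    have comm : (b * inv b) * f = f * (b * inv b) := idem_comm h (mul_inv_idem h b) hf
    calc f * b = f * (b * inv b * b) := by rw [i1 h b]
      _ = (f * (b * inv b)) * b := by simp only [mul_assoc]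
      _ = ((b * inv b) * f) * b := by rw [comm]
      _ = ((b * inv b) * (f * f)) * b := by rw [hf]
      _ = b * (inv b * f * (f * b)) := by simp only [mul_assoc]

lemma nle_refl (a : S) : Nle a a := ⟨inv a * a, inv_mul_idem h a, by rw [← mul_assoc, i1 h a]⟩

omit h in
lemma nle_trans {a b c : S} (hinv : IsInverseSemigroup S inv) :
    Nle a b → Nle b c → Nle a c := by
  rintro ⟨e, he, rfl⟩ ⟨f, hf, rfl⟩
  exact ⟨f * e, idem_mul_idem hinv hf he, by simp only [mul_assoc]⟩

lemma nle_antisymm {a b : S} : Nle a b → Nle b a → a = b := by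
  rintro ⟨e, he, rfl⟩ ⟨f, hf, hb⟩
  -- b = (b*e)*f
  have h1 : b = b * (e * f) := by rw [← mul_assoc]; exact hb
  have comm : f * e = e * f := idem_comm h hf he
  have h2 : b * e = b := by
    conv_lhs => rw [h1]
    calc b * (e * f) * e = b * (e * (f * e)) := by simp only [mul_assoc]
      _ = b * (e * (e * f)) := by rw [comm]
      _ = b * (e * f) := by rw [← mul_assoc e e f, he]
      _ = b := h1.symm
  rw [h2]

omit h in
lemma nle_mul_left {a b : S} (c : S) : Nle a b → Nle (c * a) (c * b) := by
  rintro ⟨e, he, rfl⟩; exact ⟨e, he, by simp only [mul_assoc]⟩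

lemma nle_mul_right {a b : S} (c : S) : Nle a b → Nle (a * c) (b * c) := by
  intro hab
  obtain ⟨f, hf, rfl⟩ := (nle_alt h).1 hab
  exact (nle_alt h).2 ⟨f, hf, by simp only [mul_assoc]⟩

lemma nle_mul {a b c d : S} : Nle a b → Nle c d → Nle (a * c) (b * d) :=
  fun h1 h2 => nle_trans h (nle_mul_left a h2) (nle_mul_right h d h1)

end Order

section Pow

variable {S : Type*} [Semigroup S]

lemma spow_succ (x : S) (n : ℕ) : spow x (n + 1) = spow x n * x := rfl

lemma spow_add (x : S) (m n : ℕ) : spow x m * spow x n = spow x (m + n + 1) := by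
  induction n with
  | zero => rfl
  | succ n ih =>
    rw [spow_succ, ← mul_assoc, ih]
    rfl

lemma spow_comm (x : S) (m n : ℕ) : spow x m * spow x n = spow x n * spow x m := by
  rw [spow_add, spow_add, Nat.add_comm m n]

lemma x_spow_comm (x : S) (n : ℕ) : x * spow x n = spow x n * x := by
  have := spow_comm x 0 n
  simpa [spow] using this

lemma x_mul_spow (x : S) (n : ℕ) : x * spow x n = spow x (n + 1) := by
  rw [x_spow_comm]; rfl

lemma spow_congr_add {x : S} {a b : ℕ} (hab : spow x a = spow x b) (d : ℕ) :
    spow x (a + d) = spow x (b + d) := by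
  induction d with
  | zero => exact hab
  | succ d ih => rw [← Nat.add_assoc, spow_succ, ih, ← spow_succ, Nat.add_assoc]

lemma exists_idem_spow [Finite S] (x : S) :
    ∃ m : ℕ, spow x m * spow x m = spow x m := by
  obtain ⟨i0, j0, hne, heq⟩ := Finite.exists_ne_map_eq_of_infinite (spow x)
  -- wlog i < j
  obtain ⟨i, j, hij, hsp⟩ : ∃ i j : ℕ, i < j ∧ spow x i = spow x j := by
    rcases Nat.lt_or_ge i0 j0 with hl | hg
    · exact ⟨i0, j0, hl, heq⟩
    · exact ⟨j0, i0, by omega, heq.symm⟩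
  set p := j - i with hp
  have hpp : 0 < p := Nat.sub_pos_of_lt hij
  have hshift : ∀ d, spow x (i + p + d) = spow x (i + d) := by
    intro d
    have : spow x (i + p) = spow x i := by
      rw [show i + p = j by omega]; exact hsp.symm
    have := spow_congr_add this d
    simpa using this
  have hshift2 : ∀ t d, spow x (i + t * p + d) = spow x (i + d) := by
    intro t
    induction t with
    | zero => intro d; simp
    | succ t ih =>
      intro d
      have h1 : i + (t + 1) * p + d = i + p + (t * p + d) := by ring
      rw [h1, hshift (t * p + d), ← Nat.add_assoc, ih d]
  refine ⟨(i + 1) * p - 1, ?_⟩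
  set m := (i + 1) * p - 1 with hm
  have hB : i + 1 ≤ (i + 1) * p := Nat.le_mul_of_pos_right _ hpp
  have hmi : i ≤ m := by omega
  have key : spow x (m + m + 1) = spow x m := by
    have h1 : m + m + 1 = i + (i + 1) * p + (m - i) := by omega
    have h2 : m = i + (m - i) := by omega
    rw [h1, hshift2 (i + 1) (m - i), ← h2]
  rw [spow_add, key]

lemma spow_idem_shift {x : S} {m : ℕ} (hm : spow x m * spow x m = spow x m) :
    ∀ t, spow x (m + t * (m + 1)) = spow x m := by
  intro t
  induction t with
  | zero => simp
  | succ t ih =>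
    have h1 : m + (t + 1) * (m + 1) = (m + t * (m + 1)) + m + 1 := by ring
    rw [h1, ← spow_add, ih, hm]

lemma spow_idem_unique {x : S} {m k : ℕ} (hm : spow x m * spow x m = spow x m)
    (hk : spow x k * spow x k = spow x k) : spow x m = spow x k := by
  have h1 := spow_idem_shift hm k
  have h2 := spow_idem_shift hk m
  rw [← h1, ← h2]
  congr 1
  ring

/-- a chosen exponent realizing the idempotent power -/
noncomputable def midx [Finite S] (x : S) : ℕ := Classical.choose (exists_idem_spow x)

lemma midx_spec [Finite S] (x : S) :
    spow x (midx x) * spow x (midx x) = spow x (midx x) :=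
  Classical.choose_spec (exists_idem_spow x)

/-- the idempotent power `e_x` -/
noncomputable def eId [Finite S] (x : S) : S := spow x (midx x)

/-- the group part `x e_x` -/
noncomputable def gP [Finite S] (x : S) : S := x * eId x

variable [Finite S]

lemma eId_idem (x : S) : eId x * eId x = eId x := midx_spec x

lemma eId_eq_spow {x : S} {k : ℕ} (hk : spow x k * spow x k = spow x k) :
    eId x = spow x k := spow_idem_unique (midx_spec x) hk

/-- idempotent indices exist above any bound -/
lemma exists_idem_index_ge (x : S) (n : ℕ) :
    ∃ m, n ≤ m ∧ spow x m = eId x ∧ spow x m * spow x m = spow x m := by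
  set m0 := midx x with hm0
  refine ⟨m0 + n * (m0 + 1), by nlinarith [Nat.zero_le m0], ?_, ?_⟩
  · rw [spow_idem_shift (midx_spec x) n]; rfl
  · rw [spow_idem_shift (midx_spec x) n]; exact midx_spec x

/-- shift: for `c ≥ m` (an idempotent index), `x^(c+m+1) = x^c`. -/
lemma spow_shift {x : S} {m : ℕ} (hm : spow x m * spow x m = spow x m)
    {c : ℕ} (hc : m ≤ c) : spow x (c + m + 1) = spow x c := by
  have h2 : spow x (m + m + 1) = spow x m := by rw [← spow_add, hm]
  have := spow_congr_add h2 (c - m)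
  have e1 : m + m + 1 + (c - m) = c + m + 1 := by omega
  have e2 : m + (c - m) = c := by omega
  rwa [e1, e2] at this

lemma gP_eq_spow (x : S) : gP x = spow x (midx x + 1) := by
  rw [gP, eId, x_mul_spow]

lemma eId_mul_gP (x : S) : eId x * gP x = gP x := by
  rw [gP_eq_spow, eId, spow_add]
  have := spow_shift (midx_spec x) (c := midx x + 1) (by omega)
  have h1 : midx x + (midx x + 1) + 1 = midx x + 1 + midx x + 1 := by ring
  rw [h1]; exact this

lemma gP_mul_eId (x : S) : gP x * eId x = gP x := by
  rw [gP_eq_spow, eId, spow_add]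
  exact spow_shift (midx_spec x) (c := midx x + 1) (by omega)

lemma eId_x_comm (x : S) : x * eId x = eId x * x := by
  rw [eId]; exact x_spow_comm x _

/-- `InMaxSubgroup (eId x) (gP x)` with explicit inverse `x^(2m+1)` -/
lemma mxsg_gP (x : S) : InMaxSubgroup (eId x) (gP x) := by
  set m := midx x with hm
  refine ⟨eId_mul_gP x, gP_mul_eId x, spow x (2 * m), ?_, ?_, ?_, ?_⟩
  · rw [eId, spow_add]
    have := spow_shift (midx_spec x) (c := 2 * m) (by omega)
    have h1 : m + 2 * m + 1 = 2 * m + m + 1 := by ring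
    rw [h1]; exact this
  · rw [eId, spow_add]
    exact spow_shift (midx_spec x) (c := 2 * m) (by omega)
  · rw [gP_eq_spow, spow_add, eId]
    have h1 : m + 1 + 2 * m + 1 = m + 2 * (m + 1) := by ring
    rw [h1, spow_idem_shift (midx_spec x) 2]
  · rw [gP_eq_spow, spow_add, eId]
    have h1 : 2 * m + (m + 1) + 1 = m + 2 * (m + 1) := by ring
    rw [h1, spow_idem_shift (midx_spec x) 2]

lemma mxsg_self {e : S} (he : e * e = e) : InMaxSubgroup e e :=
  ⟨he, he, e, he, he, he, he⟩

lemma isEIdem_eId (x : S) : IsEIdem x (eId x) := by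
  refine ⟨midx x + 1 * (midx x + 1), ?_⟩
  rw [spow_idem_shift (midx_spec x) 1]
  exact mxsg_self (midx_spec x)

lemma mxsg_mul {e u v : S} (hu : InMaxSubgroup e u) (hv : InMaxSubgroup e v) :
    InMaxSubgroup e (u * v) := by
  obtain ⟨heu, hue, bu, hebu, hbue, hubu, hbuu⟩ := hu
  obtain ⟨hev, hve, bv, hebv, hbve, hvbv, hbvv⟩ := hv
  refine ⟨by rw [← mul_assoc, heu], by rw [mul_assoc, hve], bv * bu, ?_, ?_, ?_, ?_⟩
  · rw [← mul_assoc, hebv]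
  · rw [mul_assoc, hbue]
  · calc u * v * (bv * bu) = u * (v * bv) * bu := by simp only [mul_assoc]
      _ = u * e * bu := by rw [hvbv]
      _ = u * bu := by rw [hue]
      _ = e := hubu
  · calc bv * bu * (u * v) = bv * (bu * u) * v := by simp only [mul_assoc]
      _ = bv * e * v := by rw [hbuu]
      _ = bv * v := by rw [hbve]
      _ = e := hbvv

section withinv
variable {inv : S → S} (h : IsInverseSemigroup S inv)
include h

lemma mxsg_inv {e u : S} (hu : InMaxSubgroup e u) :
    inv u * u = e ∧ u * inv u = e ∧ e * inv u = inv u ∧ inv u * e = inv u := by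
  obtain ⟨heu, hue, b, heb, hbe, hub, hbu⟩ := hu
  have hb : b = inv u := by
    refine iu h ?_ ?_
    · rw [hub, heu]
    · rw [mul_assoc, hub, hbe]
  subst hb
  exact ⟨hbu, hub, heb, hbe⟩

lemma eId_unique {x e : S} (he : IsEIdem x e) : e = eId x := by
  obtain ⟨k, hk⟩ := he
  -- e is idempotent
  have heid : e * e = e := by
    obtain ⟨heu, hue, b, heb, hbe, hub, hbu⟩ := hk
    calc e * e = e * (spow x k * b) := by rw [hub]
      _ = (e * spow x k) * b := by rw [mul_assoc]
      _ = spow x k * b := by rw [heu]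
      _ = e := hub
  have hgrp : ∀ j : ℕ, InMaxSubgroup e (spow x (j * (k + 1) + k)) := by
    intro j
    induction j with
    | zero => simpa using hk
    | succ j ih =>
      have h1 : (j + 1) * (k + 1) + k = (j * (k + 1) + k) + k + 1 := by ring
      rw [h1, ← spow_add]
      exact mxsg_mul ih hk
  set m := midx x with hm
  have key : InMaxSubgroup e (eId x) := by
    have := hgrp m
    have h1 : m * (k + 1) + k = m + k * (m + 1) := by ring
    rw [h1, spow_idem_shift (midx_spec x) k] at this
    exact this
  -- conclude e = eId x
  obtain ⟨heE, hEe, c, hec, hce, hEc, hcE⟩ := key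
  calc e = eId x * c := hEc.symm
    _ = (eId x * eId x) * c := by rw [eId_idem]
    _ = eId x * (eId x * c) := by rw [mul_assoc]
    _ = eId x * e := by rw [hEc]
    _ = eId x := hEe

lemma inv_gP (x : S) : inv (gP x) * gP x = eId x ∧ gP x * inv (gP x) = eId x :=
  ⟨(mxsg_inv h (mxsg_gP x)).1, (mxsg_inv h (mxsg_gP x)).2.1⟩

lemma eId_of_mxsg {e u : S} (hu : InMaxSubgroup e u) : eId u = e :=
  (eId_unique h ⟨0, hu⟩).symm

lemma gP_of_mxsg {e u : S} (hu : InMaxSubgroup e u) : gP u = u := by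
  rw [gP, eId_of_mxsg h hu, hu.2.1]

lemma eId_gP (x : S) : eId (gP x) = eId x := eId_of_mxsg h (mxsg_gP x)

/-- monotonicity of `eId` with respect to the natural order -/
lemma nle_spow {y x : S} (hyx : Nle y x) : ∀ n, Nle (spow y n) (spow x n) := by
  intro n
  induction n with
  | zero => exact hyx
  | succ n ih => exact nle_mul h ih hyx

lemma nle_eId {y x : S} (hyx : Nle y x) : Nle (eId y) (eId x) := by
  obtain ⟨K, hK1, hKy, hKyi⟩ := exists_idem_index_ge y (midx x)
  -- need common index: take K' := idem index for both
  obtain ⟨M, hM1, hMx, hMxi⟩ := exists_idem_index_ge x 0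
  -- use K'' = (midx y)+ (midx x)*(midx y + 1) style: instead construct directly
  obtain ⟨A, hA, hAy, hAyi⟩ := exists_idem_index_ge y 0
  -- A is an idem index for y; B for x; common index C := A + B*(A+1) must also be ≡ for x...
  -- Instead: C := (A+1)*(B+1)-1 where A idem index of y, B idem index of x
  obtain ⟨B, hB, hBx, hBxi⟩ := exists_idem_index_ge x 0
  have hCy : spow y ((A + 1) * (B + 1) - 1) = eId y := by
    have h1 : (A + 1) * (B + 1) - 1 = A + B * (A + 1) := by
      have h2 : (A + 1) * (B + 1) = A + B * (A + 1) + 1 := by ring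
      omega
    rw [h1, spow_idem_shift hAyi B, hAy]
  have hCx : spow x ((A + 1) * (B + 1) - 1) = eId x := by
    have h1 : (A + 1) * (B + 1) - 1 = B + A * (B + 1) := by
      have h2 : (A + 1) * (B + 1) = B + A * (B + 1) + 1 := by ring
      omega
    rw [h1, spow_idem_shift hBxi A, hBx]
  rw [← hCy, ← hCx]
  exact nle_spow h hyx _
end withinv

end Pow


section Conj

variable {S : Type*} [Semigroup S] {inv : S → S}

lemma primConj_symm {x y : S} : PrimConj x y → PrimConj y x := by
  rintro ⟨u, v, h1, h2⟩; exact ⟨v, u, h2, h1⟩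

lemma sgConj_symm {x y : S} : SgConj x y → SgConj y x := by
  intro hxy
  induction hxy with
  | single h => exact Relation.TransGen.single (primConj_symm h)
  | tail _ h ih => exact Relation.TransGen.head (primConj_symm h) ih

lemma primConj_refl (x : S) : PrimConj x x :=
  ⟨1, (x : WithOne S), by simp, by simp⟩

lemma primConj_of_eq {x y u v : S} (h1 : u * v = x) (h2 : v * u = y) : PrimConj x y :=
  ⟨(u : WithOne S), (v : WithOne S), by rw [← WithOne.coe_mul, h1],
    by rw [← WithOne.coe_mul, h2]⟩

/-- `f_n = (x^{n+1})⁻¹ x^{n+1}` -/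
def fN (inv : S → S) (x : S) (n : ℕ) : S := inv (spow x n) * spow x n

def pN (inv : S → S) (x : S) (n : ℕ) : S := spow x n * inv (spow x n)

variable (h : IsInverseSemigroup S inv)
include h

lemma fN_idem (x : S) (n : ℕ) : fN inv x n * fN inv x n = fN inv x n :=
  inv_mul_idem h (spow x n)

lemma pN_idem (x : S) (n : ℕ) : pN inv x n * pN inv x n = pN inv x n :=
  mul_inv_idem h (spow x n)

lemma spow_mul_fN (x : S) (n k : ℕ) :
    spow x (n + k) * fN inv x n = spow x (n + k) := by
  cases k with
  | zero =>
    show spow x n * (inv (spow x n) * spow x n) = spow x n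
    rw [← mul_assoc, i1 h]
  | succ k =>
    have hd : spow x (k + n + 1) = spow x (n + (k + 1)) := by ring_nf
    rw [← hd, ← spow_add, mul_assoc, fN]
    rw [← mul_assoc (spow x n), i1 h]

lemma fN_mul_fN (x : S) (n k : ℕ) :
    fN inv x (n + k) * fN inv x n = fN inv x (n + k) := by
  show inv (spow x (n+k)) * spow x (n+k) * fN inv x n = _
  rw [mul_assoc, spow_mul_fN h]
  rfl

lemma pN_mul_pN (x : S) (n k : ℕ) :
    pN inv x n * pN inv x (n + k) = pN inv x (n + k) := by
  have key : pN inv x n * spow x (n + k) = spow x (n + k) := by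
    cases k with
    | zero =>
      show spow x n * inv (spow x n) * spow x n = spow x n
      exact i1 h _
    | succ k =>
      have hd : spow x n * spow x k = spow x (n + (k + 1)) := by
        rw [spow_add]; ring_nf
      rw [← hd, ← mul_assoc, pN, i1 h _, hd]
  show pN inv x n * (spow x (n+k) * inv (spow x (n+k))) = _
  rw [← mul_assoc, key]
  rfl

lemma x_mul_fN_succ (x : S) (n : ℕ) :
    x * fN inv x (n + 1) = (x * inv x) * (fN inv x n * x) := by
  have h1 : fN inv x (n + 1) = (inv x * inv (spow x n)) * (x * spow x n) := by
    rw [fN, x_mul_spow]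
    congr 1
    rw [← inv_mul h, ← spow_succ]
  rw [h1]
  have h2 : fN inv x n * x = inv (spow x n) * (x * spow x n) := by
    rw [x_mul_spow, fN, spow_succ, mul_assoc]
  rw [h2]
  simp only [mul_assoc]

lemma zstep (x : S) (n : ℕ) :
    (fN inv x n * x) * fN inv x (n + 1) = fN inv x n * x := by
  have comm : fN inv x n * (x * inv x) = (x * inv x) * fN inv x n :=
    idem_comm h (fN_idem h x n) (mul_inv_idem h x)
  calc (fN inv x n * x) * fN inv x (n+1)
      = fN inv x n * (x * fN inv x (n+1)) := by rw [mul_assoc]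
    _ = fN inv x n * ((x * inv x) * (fN inv x n * x)) := by rw [x_mul_fN_succ h]
    _ = (fN inv x n * (x * inv x)) * (fN inv x n * x) := by simp only [mul_assoc]
    _ = ((x * inv x) * fN inv x n) * (fN inv x n * x) := by rw [comm]
    _ = (x * inv x) * ((fN inv x n * fN inv x n) * x) := by simp only [mul_assoc]
    _ = (x * inv x) * (fN inv x n * x) := by rw [fN_idem h]
    _ = ((x * inv x) * fN inv x n) * x := by rw [← mul_assoc]
    _ = (fN inv x n * (x * inv x)) * x := by rw [← comm]
    _ = fN inv x n * (x * inv x * x) := by simp only [mul_assoc]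
    _ = fN inv x n * x := by rw [i1 h]

lemma sgConj_fN_chain (x : S) : ∀ n : ℕ, SgConj x (fN inv x n * x) := by
  intro n
  induction n with
  | zero =>
    refine Relation.TransGen.single (primConj_of_eq (u := x) (v := fN inv x 0) ?_ rfl)
    show x * (inv x * x) = x
    rw [← mul_assoc, i1 h]
  | succ n ih =>
    refine Relation.TransGen.tail ih (primConj_of_eq (u := fN inv x n * x)
      (v := fN inv x (n + 1)) (zstep h x n) ?_)
    rw [← mul_assoc]
    have := fN_mul_fN h x n 1
    rw [Nat.add_comm n 1] at this ⊢
    rw [this]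

end Conj


section Part4

variable {S : Type*} [Semigroup S] {inv : S → S} [Finite S]
variable (h : IsInverseSemigroup S inv)
include h

lemma nle_idem_absorb {a q : S} (hq : q * q = q) (hle : Nle a q) : q * a = a := by
  obtain ⟨e, he, rfl⟩ := hle
  rw [← mul_assoc, hq]

lemma nle_idem_absorb' {a q : S} (hq : q * q = q) (hle : Nle a q) : a * q = a := by
  obtain ⟨f, hf, rfl⟩ := (nle_alt h).1 hle
  rw [mul_assoc, hq]

lemma eId_nle_fN (x : S) (n : ℕ) : Nle (eId x) (fN inv x n) := by
  obtain ⟨m, hmn, hms, hmi⟩ := exists_idem_index_ge x n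
  have hfm : fN inv x m = eId x := by
    rw [fN, inv_idem h (by rw [hms]; exact eId_idem x), hms, eId_idem]
  have habs : fN inv x n * eId x = eId x := by
    rw [← hfm]
    have := fN_mul_fN h x n (m - n)
    rw [Nat.add_sub_cancel' hmn] at this
    calc fN inv x n * fN inv x m = fN inv x n * (fN inv x m * fN inv x n) := by rw [this]
      _ = (fN inv x n * fN inv x m) * fN inv x n := by rw [mul_assoc]
      _ = (fN inv x m * fN inv x n) * fN inv x n := by
          rw [idem_comm h (fN_idem h x n) (fN_idem h x m)]
      _ = fN inv x m * (fN inv x n * fN inv x n) := by rw [mul_assoc]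
      _ = fN inv x m := by rw [fN_idem h, this]
  exact ⟨eId x, eId_idem x, habs.symm⟩

lemma eId_nle_pN (x : S) (n : ℕ) : Nle (eId x) (pN inv x n) := by
  obtain ⟨m, hmn, hms, hmi⟩ := exists_idem_index_ge x n
  have hpm : pN inv x m = eId x := by
    rw [pN, inv_idem h (by rw [hms]; exact eId_idem x), hms, eId_idem]
  have habs : pN inv x n * eId x = eId x := by
    rw [← hpm]
    have := pN_mul_pN h x n (m - n)
    rw [Nat.add_sub_cancel' hmn] at this
    rw [this]
  exact ⟨eId x, eId_idem x, habs.symm⟩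

lemma eId_nle_invx_x (x : S) : Nle (eId x) (inv x * x) := eId_nle_fN h x 0
lemma eId_nle_x_invx (x : S) : Nle (eId x) (x * inv x) := eId_nle_pN h x 0

lemma eId_sandwich {x y : S} (hyx : Nle y x) (hgy : Nle (gP x) y) : eId y = eId x := by
  have h1 : Nle (eId y) (eId x) := nle_eId h hyx
  have h2 : Nle (eId x) (eId y) := by
    have := nle_eId h hgy
    rwa [eId_gP h] at this
  exact nle_antisymm h h1 h2

lemma gP_eq_eId_mul (x : S) : gP x = eId x * x := by rw [gP, eId_x_comm]

/-- restriction by a dominating idempotent stays conjugate : `x q ∼ x` -/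
lemma sgConj_mul_idem_right {x q : S} (hq : q * q = q) (hqE : q * eId x = eId x) :
    SgConj (x * q) x := by
  have h1 : Nle (x * q) x := ⟨q, hq, rfl⟩
  have h2 : Nle (gP x) (x * q) := by
    refine ⟨eId x, eId_idem x, ?_⟩
    rw [mul_assoc, hqE, gP]
  have hE : eId (x * q) = eId x := eId_sandwich h h1 h2
  have hg : gP (x * q) = gP x := by
    rw [gP, hE, mul_assoc, hqE, gP]
  have c1 : SgConj (x * q) (gP x) := by
    have := sgConj_fN_chain h (x * q) (midx (x * q))
    have hfx : fN inv (x * q) (midx (x * q)) * (x * q) = gP (x * q) := by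
      have : fN inv (x * q) (midx (x * q)) = eId (x * q) := by
        rw [fN, inv_idem h (midx_spec (x*q)), midx_spec (x*q)]; rfl
      rw [this, ← gP_eq_eId_mul h]
    rw [hfx, hg] at this
    exact this
  have c2 : SgConj x (gP x) := by
    have := sgConj_fN_chain h x (midx x)
    have hfx : fN inv x (midx x) = eId x := by
      rw [fN, inv_idem h (midx_spec x), midx_spec x]; rfl
    rw [hfx, ← gP_eq_eId_mul h] at this
    exact this
  exact Relation.TransGen.trans c1 (sgConj_symm c2)

lemma sgConj_gP (x : S) : SgConj x (gP x) := by
  have := sgConj_fN_chain h x (midx x)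
  have hfx : fN inv x (midx x) = eId x := by
    rw [fN, inv_idem h (midx_spec x), midx_spec x]; rfl
  rw [hfx, ← gP_eq_eId_mul h] at this
  exact this

/-- the r-conjugation primary step -/
lemma primConj_conjugate {u r e : S} (hue : u * e = u) (hre : r * inv r = e) :
    PrimConj u (inv r * u * r) := by
  refine primConj_of_eq (u := u * r) (v := inv r) ?_ ?_
  · rw [mul_assoc, hre, hue]
  · simp only [mul_assoc]

/-- finiteness: a partial bijection from `e` onto a part of `e` is onto `e` -/
lemma dom_eq {t e : S} (ht1 : inv t * t = e) (ht2 : (t * inv t) * e = t * inv t) :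
    t * inv t = e := by
  set p := t * inv t with hp
  have hei : e * e = e := by rw [← ht1]; exact inv_mul_idem h t
  have hpi : p * p = p := mul_inv_idem h t
  set A := Set.range (fun z : S => z * e) with hA
  set B := Set.range (fun z : S => z * p) with hB
  have hBA : B ⊆ A := by
    rintro _ ⟨z, rfl⟩
    refine ⟨z * p, ?_⟩
    show z * p * e = z * p
    rw [mul_assoc, ht2]
  have hmaps : ∀ a ∈ A, a * inv t ∈ B := by
    rintro _ ⟨z, rfl⟩
    refine ⟨z * e * inv t, ?_⟩
    show z * e * inv t * p = z * e * inv t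
    rw [hp]
    calc z * e * inv t * (t * inv t) = z * e * (inv t * t * inv t) := by
          simp only [mul_assoc]
      _ = z * e * inv t := by rw [i2 h]
  have hinj : Set.InjOn (fun a => a * inv t) A := by
    rintro _ ⟨z, rfl⟩ _ ⟨w, rfl⟩ hzw
    have hzw2 : z * e * inv t = w * e * inv t := hzw
    have key2 : ∀ v : S, v * e * (inv t * t) = v * e := by
      intro v; rw [ht1, mul_assoc, hei]
    show z * e = w * e
    calc z * e = z * e * (inv t * t) := (key2 z).symm
      _ = z * e * inv t * t := by simp only [mul_assoc]
      _ = w * e * inv t * t := by rw [hzw2]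
      _ = w * e * (inv t * t) := by simp only [mul_assoc]
      _ = w * e := key2 w
  have hcard : A.ncard ≤ B.ncard :=
    Set.ncard_le_ncard_of_injOn (fun a => a * inv t) hmaps hinj (Set.toFinite B)
  have hBA2 : B = A := Set.eq_of_subset_of_ncard_le hBA hcard (Set.toFinite A)
  have heA : e ∈ A := ⟨e, hei⟩
  rw [← hBA2] at heA
  obtain ⟨z, hz⟩ := heA
  have hz2 : z * p = e := hz
  have h1 : e * p = e := by
    calc e * p = z * p * p := by rw [hz2]
      _ = z * (p * p) := by rw [mul_assoc]
      _ = z * p := by rw [hpi]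
      _ = e := hz2
  have h2 : p * e = p := ht2
  have := idem_comm h hpi hei
  rw [← h2, this, h1]

end Part4

section Part5

variable {S : Type*} [Semigroup S] {inv : S → S}

lemma inv1_coe (s : S) : inv₁ inv (s : WithOne S) = ((inv s : S) : WithOne S) := by
  rw [inv₁, dif_neg (WithOne.coe_ne_one)]
  congr 1

lemma inv1_one : inv₁ inv (1 : WithOne S) = 1 := by rw [inv₁, dif_pos rfl]

variable [Finite S] (h : IsInverseSemigroup S inv)
include h

/-- building an `ActsTo` with a concrete semigroup element -/
lemma actsTo_coe {s x y e : S} (hIs : IsEIdem x e) (hei : e * e = e)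
    (hge : (inv s * s) * e = e) (hval : s * x * inv s = y) :
    ActsTo inv (s : WithOne S) x y := by
  constructor
  · refine ⟨e, hIs, (e : WithOne S), ?_, ?_⟩
    · rw [← WithOne.coe_mul, hei]
    · rw [inv1_coe, ← WithOne.coe_mul, ← WithOne.coe_mul, hge]
  · rw [inv1_coe, ← WithOne.coe_mul, ← WithOne.coe_mul, hval]

lemma actConjP_symm {x y : S} : ActConjP inv x y → ActConjP inv y x := by
  rintro ⟨a, hc⟩; exact ⟨a, hc.symm⟩

lemma actConj_symm {x y : S} : ActConj inv x y → ActConj inv y x := by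
  intro hxy
  induction hxy with
  | single h1 => exact Relation.TransGen.single (actConjP_symm h h1)
  | tail _ h1 ih => exact Relation.TransGen.head (actConjP_symm h h1) ih

/-- `x ≈ g_x` -/
lemma actConj_gP (x : S) : ActConj inv x (gP x) := by
  have key : ∀ n : ℕ, ActConj inv x (fN inv x n * x) := by
    intro n
    induction n with
    | zero =>
      refine Relation.TransGen.single ⟨(fN inv x 0 : S), Or.inl ?_⟩
      refine actsTo_coe h (isEIdem_eId x) (eId_idem x) ?_ ?_
      · rw [inv_idem h (fN_idem h x 0)]
        show fN inv x 0 * fN inv x 0 * eId x = eId x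
        rw [fN_idem h]
        exact nle_idem_absorb h (fN_idem h x 0) (eId_nle_fN h x 0)
      · rw [inv_idem h (fN_idem h x 0)]
        have hxf : x * fN inv x 0 = x := by
          show x * (inv x * x) = x
          rw [← mul_assoc, i1 h]
        calc fN inv x 0 * x * fN inv x 0 = fN inv x 0 * (x * fN inv x 0) := by
              rw [mul_assoc]
          _ = fN inv x 0 * x := by rw [hxf]
    | succ n ih =>
      refine Relation.TransGen.tail ih ⟨(fN inv x (n+1) : S), Or.inl ?_⟩
      have hEn : eId (fN inv x n * x) = eId x := by
        refine eId_sandwich h ((nle_alt h).2 ⟨fN inv x n, fN_idem h x n, rfl⟩) ?_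
        refine (nle_alt h).2 ⟨eId x, eId_idem x, ?_⟩
        rw [← mul_assoc, nle_idem_absorb' h (fN_idem h x n) (eId_nle_fN h x n),
          ← gP_eq_eId_mul h]
      refine actsTo_coe h (e := eId x) ?_ (eId_idem _) ?_ ?_
      · rw [← hEn]; exact isEIdem_eId (fN inv x n * x)
      · rw [inv_idem h (fN_idem h x (n+1)), fN_idem h]
        exact nle_idem_absorb h (fN_idem h x (n+1)) (eId_nle_fN h x (n+1))
      · rw [inv_idem h (fN_idem h x (n+1))]
        calc fN inv x (n+1) * (fN inv x n * x) * fN inv x (n+1)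
            = fN inv x (n+1) * ((fN inv x n * x) * fN inv x (n+1)) := by
              simp only [mul_assoc]
          _ = fN inv x (n+1) * (fN inv x n * x) := by rw [zstep h]
          _ = (fN inv x (n+1) * fN inv x n) * x := by rw [mul_assoc]
          _ = fN inv x (n+1) * x := by rw [fN_mul_fN h x n 1]
  have := key (midx x)
  have hfx : fN inv x (midx x) = eId x := by
    rw [fN, inv_idem h (midx_spec x), midx_spec x]; rfl
  rw [hfx, ← gP_eq_eId_mul h] at this
  exact this

end Part5


section Rep

variable {S : Type*} [Semigroup S] {inv : S → S}

/-- the L-class style index set: elements with domain idempotent `f` -/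
abbrev XS (inv : S → S) (f : S) : Type _ := {s : S // inv s * s = f}

variable [Finite S] (h : IsInverseSemigroup S inv)
include h

lemma idem_eq_of {f r : S} (hfi : f * f = f) (hri : r * r = r)
    (hrf : r * f = r) (hfr : f * r = f) : r = f := by
  rw [← hrf, idem_comm h hri hfi, hfr]

lemma rfact_idem {f s q : S} (hs : inv s * s = f) (hq : q * q = q) :
    (inv s * q * s) * (inv s * q * s) = inv s * q * s := by
  have comm : q * (s * inv s) = (s * inv s) * q := idem_comm h hq (mul_inv_idem h s)
  calc (inv s * q * s) * (inv s * q * s)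
      = inv s * (q * (s * inv s)) * (q * s) := by simp only [mul_assoc]
    _ = inv s * ((s * inv s) * q) * (q * s) := by rw [comm]
    _ = (inv s * s * inv s) * ((q * q) * s) := by simp only [mul_assoc]
    _ = inv s * (q * s) := by rw [i2 h, hq]
    _ = inv s * q * s := by rw [mul_assoc]

lemma rfact_mul_f {f s q : S} (hs : inv s * s = f) :
    (inv s * q * s) * f = inv s * q * s := by
  rw [← hs]
  calc (inv s * q * s) * (inv s * s) = inv s * q * (s * inv s * s) := by
        simp only [mul_assoc]
    _ = inv s * q * s := by rw [i1 h]

lemma condA_to_B {f s p q : S} (hs : inv s * s = f) (hp : p * p = p) (hq : q * q = q)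
    (hpq : p * q = p) (hA : inv s * p * s = f) : inv s * q * s = f := by
  have hfi : f * f = f := by rw [← hs]; exact inv_mul_idem h s
  have hfr : f * (inv s * q * s) = f := by
    rw [← hA]
    have comm : p * (s * inv s) = (s * inv s) * p := idem_comm h hp (mul_inv_idem h s)
    calc (inv s * p * s) * (inv s * q * s)
        = inv s * (p * (s * inv s)) * (q * s) := by simp only [mul_assoc]
      _ = inv s * ((s * inv s) * p) * (q * s) := by rw [comm]
      _ = (inv s * s * inv s) * ((p * q) * s) := by simp only [mul_assoc]
      _ = inv s * (p * s) := by rw [i2 h, hpq]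
      _ = inv s * p * s := by rw [mul_assoc]
  exact idem_eq_of h hfi (rfact_idem h hs hq) (rfact_mul_f h hs) hfr

/-- conjugating an idempotent relation by a group element of `G_f` -/
lemma condW_iff {f w s q : S} (hw : InMaxSubgroup f w) (hs : inv s * s = f)
    (hq : q * q = q) :
    inv (s * w) * (q * (s * w)) = f ↔ inv s * q * s = f := by
  obtain ⟨hiw, hwi, hfiw, hiwf⟩ := mxsg_inv h hw
  have hwf : w * f = w := hw.2.1
  have hfi : f * f = f := by rw [← hs]; exact inv_mul_idem h s
  have hrew : inv (s * w) * (q * (s * w)) = inv w * (inv s * q * s) * w := by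
    rw [inv_mul h]; simp only [mul_assoc]
  rw [hrew]
  constructor
  · intro hD
    have hri := rfact_idem h hs hq
    have hrf := rfact_mul_f h (q := q) hs
    have h1 : f * (inv s * q * s * w) = w := by
      have h0 : w * (inv w * (inv s * q * s) * w) = w * f := by rw [hD]
      rw [hwf] at h0
      calc f * (inv s * q * s * w) = (w * inv w) * (inv s * q * s * w) := by rw [hwi]
        _ = w * (inv w * (inv s * q * s) * w) := by simp only [mul_assoc]
        _ = w := h0
    have h2 : f * (inv s * q * s) * f = f := by
      have h0 : f * (inv s * q * s * w) * inv w = w * inv w := by rw [h1]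
      rw [hwi] at h0
      calc f * (inv s * q * s) * f = f * (inv s * q * s) * (w * inv w) := by rw [hwi]
        _ = f * (inv s * q * s * w) * inv w := by simp only [mul_assoc]
        _ = f := h0
    have hfr : f * (inv s * q * s) = f := by
      calc f * (inv s * q * s) = f * (inv s * q * s * f) := by rw [hrf]
        _ = f * (inv s * q * s) * f := by simp only [mul_assoc]
        _ = f := h2
    exact idem_eq_of h hfi hri hrf hfr
  · intro hB
    rw [hB, hiwf, hiw]

variable (f : S) in
open Classical in
noncomputable def Phi (x : S) : ((XS inv f) → ℂ) →ₗ[ℂ] ((XS inv f) → ℂ) where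
  toFun v s := if hc : inv s.1 * ((x * inv x) * s.1) = f then
      v ⟨inv x * s.1, by
        rw [inv_mul h, inv_inv h]
        simp only [mul_assoc] at hc ⊢
        exact hc⟩
    else 0
  map_add' v v' := by
    funext s
    by_cases hc : inv s.1 * ((x * inv x) * s.1) = f
    · simp only [dif_pos hc, Pi.add_apply]
    · simp only [dif_neg hc, Pi.add_apply, add_zero]
  map_smul' c v := by
    funext s
    by_cases hc : inv s.1 * ((x * inv x) * s.1) = f
    · simp only [dif_pos hc, Pi.smul_apply, RingHom.id_apply, smul_eq_mul]
    · simp only [dif_neg hc, Pi.smul_apply, RingHom.id_apply, smul_eq_mul, mul_zero]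

open Classical in
lemma Phi_apply (f x : S) (v : (XS inv f) → ℂ) (s : XS inv f) :
    Phi h f x v s = if hc : inv s.1 * ((x * inv x) * s.1) = f then
      v ⟨inv x * s.1, by
        rw [inv_mul h, inv_inv h]
        simp only [mul_assoc] at hc ⊢
        exact hc⟩
    else 0 := rfl

lemma Phi_mul (f x y : S) :
    Phi h f (x * y) = (Phi h f x).comp (Phi h f y) := by
  apply LinearMap.ext; intro v
  funext s
  have hs := s.2
  -- condition unfolding: A ↔ C
  have hAC : inv s.1 * (((x * y) * inv (x * y)) * s.1) = f ↔
      inv (inv x * s.1) * ((y * inv y) * (inv x * s.1)) = f := by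
    rw [inv_mul h (a := x) (b := y), inv_mul h (a := inv x), inv_inv h]
    constructor <;> intro hh <;> (simp only [mul_assoc] at hh ⊢; exact hh)
  have hABval : ∀ (hA : inv s.1 * (((x * y) * inv (x * y)) * s.1) = f),
      inv s.1 * ((x * inv x) * s.1) = f := by
    intro hA
    have hp : ((x * (y * inv y)) * inv x) * ((x * (y * inv y)) * inv x)
        = (x * (y * inv y)) * inv x := by
      have comm : (y * inv y) * (inv x * x) = (inv x * x) * (y * inv y) :=
        idem_comm h (mul_inv_idem h y) (inv_mul_idem h x)
      calc ((x * (y * inv y)) * inv x) * ((x * (y * inv y)) * inv x)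
          = x * ((y * inv y) * (inv x * x)) * ((y * inv y) * inv x) := by
            simp only [mul_assoc]
        _ = x * ((inv x * x) * (y * inv y)) * ((y * inv y) * inv x) := by rw [comm]
        _ = (x * inv x * x) * ((y * inv y) * (y * inv y)) * inv x := by
            simp only [mul_assoc]
        _ = x * ((y * inv y) * (y * inv y)) * inv x := by rw [i1 h]
        _ = (x * (y * inv y)) * inv x := by rw [mul_inv_idem h y]
    have hpq : (((x * (y * inv y)) * inv x)) * (x * inv x) = (x * (y * inv y)) * inv x := by
      calc ((x * (y * inv y)) * inv x) * (x * inv x)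
          = x * (y * inv y) * (inv x * x * inv x) := by simp only [mul_assoc]
        _ = (x * (y * inv y)) * inv x := by rw [i2 h]
    have hA' : inv s.1 * ((x * (y * inv y)) * inv x) * s.1 = f := by
      rw [inv_mul h (a := x) (b := y)] at hA
      simp only [mul_assoc] at hA ⊢
      exact hA
    have := condA_to_B h hs hp (mul_inv_idem h x) hpq hA'
    simp only [mul_assoc] at this ⊢
    exact this
  rw [LinearMap.comp_apply, Phi_apply, Phi_apply]
  by_cases hA : inv s.1 * (((x * y) * inv (x * y)) * s.1) = f
  · have hB := hABval hA
    have hC := hAC.1 hA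
    rw [dif_pos hA, dif_pos hB, Phi_apply, dif_pos hC]
    congr 1
    apply Subtype.ext
    show inv (x * y) * s.1 = inv y * (inv x * s.1)
    rw [inv_mul h, mul_assoc]
  · rw [dif_neg hA]
    by_cases hB : inv s.1 * ((x * inv x) * s.1) = f
    · have hC : ¬ inv (inv x * s.1) * ((y * inv y) * (inv x * s.1)) = f :=
        fun hC => hA (hAC.2 hC)
      rw [dif_pos hB, Phi_apply, dif_neg hC]
    · rw [dif_neg hB]

end Rep


section Rep2

variable {S : Type*} [Semigroup S] {inv : S → S} [Finite S]
variable (h : IsInverseSemigroup S inv)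
include h

variable {w f : S}

noncomputable def actX (hw : InMaxSubgroup f w) (s : XS inv f) : XS inv f :=
  ⟨s.1 * w, by
    rw [inv_mul h, mul_assoc, ← mul_assoc (inv s.1), s.2, hw.1, (mxsg_inv h hw).1]⟩

lemma actX_val (hw : InMaxSubgroup f w) (s : XS inv f) :
    (actX h hw s).1 = s.1 * w := rfl

noncomputable def Vsub (hw : InMaxSubgroup f w) (μ : ℂ) : Submodule ℂ (XS inv f → ℂ) where
  carrier := {v | ∀ s, v (actX h hw s) = μ * v s}
  add_mem' := by
    intro a b ha hb s
    simp only [Pi.add_apply, ha s, hb s]; ring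
  zero_mem' := by intro s; simp
  smul_mem' := by
    intro c v hv s
    simp only [Pi.smul_apply, smul_eq_mul, hv s]; ring

lemma Phi_mem (hw : InMaxSubgroup f w) (μ : ℂ) (x : S) {v : XS inv f → ℂ}
    (hv : v ∈ Vsub h hw μ) : Phi h f x v ∈ Vsub h hw μ := by
  intro s
  rw [Phi_apply, Phi_apply]
  have hiff := condW_iff h hw s.2 (mul_inv_idem h x)
  by_cases hc : inv s.1 * ((x * inv x) * s.1) = f
  · have hc2 : inv ((actX h hw s).1) * ((x * inv x) * (actX h hw s).1) = f := by
      rw [actX_val]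
      apply hiff.2
      simp only [mul_assoc] at hc ⊢
      exact hc
    rw [dif_pos hc, dif_pos hc2]
    have hB : inv (inv x * s.1) * (inv x * s.1) = f := by
      rw [inv_mul h, inv_inv h]
      simp only [mul_assoc] at hc ⊢
      exact hc
    have hval : inv x * (actX h hw s).1 = (actX h hw (⟨inv x * s.1, hB⟩ : XS inv f)).1 := by
      rw [actX_val, actX_val, mul_assoc]
    exact (congrArg v (Subtype.ext hval)).trans (hv ⟨inv x * s.1, hB⟩)
  · have hc2 : ¬ (inv ((actX h hw s).1) * ((x * inv x) * (actX h hw s).1) = f) := by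
      rw [actX_val]
      intro hh
      apply hc
      have hh2 : inv (s.1 * w) * ((x * inv x) * (s.1 * w)) = f := hh
      have hh3 : inv s.1 * (x * inv x) * s.1 = f := by
        apply hiff.1
        simp only [mul_assoc] at hh2 ⊢
        exact hh2
      simp only [mul_assoc] at hh3 ⊢
      exact hh3
    rw [dif_neg hc, dif_neg hc2, mul_zero]

noncomputable def phiRep (hw : InMaxSubgroup f w) (μ : ℂ) :
    S →ₙ* Module.End ℂ (Vsub h hw μ) where
  toFun x := (Phi h f x).restrict (fun v hv => Phi_mem h hw μ x hv)
  map_mul' x y := by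
    apply LinearMap.ext
    intro v
    apply Subtype.ext
    show Phi h f (x * y) v.1 = Phi h f x (Phi h f y v.1)
    rw [Phi_mul h]
    rfl

noncomputable def PP (hw : InMaxSubgroup f w) (d : ℕ) (μ : ℂ) :
    (XS inv f → ℂ) →ₗ[ℂ] (XS inv f → ℂ) where
  toFun v s := ((d + 1 : ℕ) : ℂ)⁻¹ *
    ∑ k ∈ Finset.range (d + 1), μ ^ (d * k) * v ((actX h hw)^[k] s)
  map_add' v v' := by
    funext s
    simp only [Pi.add_apply, mul_add, Finset.sum_add_distrib]
  map_smul' c v := by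
    funext s
    simp only [Pi.smul_apply, smul_eq_mul, RingHom.id_apply]
    have : ∑ k ∈ Finset.range (d + 1), μ ^ (d * k) * (c * v ((actX h hw)^[k] s))
        = c * ∑ k ∈ Finset.range (d + 1), μ ^ (d * k) * v ((actX h hw)^[k] s) := by
      rw [Finset.mul_sum]
      apply Finset.sum_congr rfl
      intro k _
      ring
    rw [this]
    ring

lemma PP_apply (hw : InMaxSubgroup f w) (d : ℕ) (μ : ℂ) (v : XS inv f → ℂ)
    (s : XS inv f) :
    PP h hw d μ v s = ((d + 1 : ℕ) : ℂ)⁻¹ *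
      ∑ k ∈ Finset.range (d + 1), μ ^ (d * k) * v ((actX h hw)^[k] s) := rfl

lemma actX_iter_val (hw : InMaxSubgroup f w) :
    ∀ (k : ℕ) (s : XS inv f), ((actX h hw)^[k + 1] s).1 = s.1 * spow w k := by
  intro k
  induction k with
  | zero => intro s; rfl
  | succ k ih =>
    intro s
    rw [Function.iterate_succ_apply', actX_val, ih s, spow_succ, mul_assoc]

lemma actX_period (hw : InMaxSubgroup f w) {d : ℕ} (hd : spow w d = f) (s : XS inv f) :
    (actX h hw)^[d + 1] s = s := by
  apply Subtype.ext
  rw [actX_iter_val h hw d s, hd]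
  obtain ⟨a, ha⟩ := s
  show a * f = a
  rw [← ha, ← mul_assoc, i1 h]

lemma actX_mod (hw : InMaxSubgroup f w) {d : ℕ} (hd : spow w d = f) (a : ℕ)
    (s : XS inv f) : (actX h hw)^[a] s = (actX h hw)^[a % (d + 1)] s := by
  have hNq : ∀ (q : ℕ) (s : XS inv f), (actX h hw)^[(d + 1) * q] s = s := by
    intro q
    induction q with
    | zero => intro s; rfl
    | succ q ih =>
      intro s
      have : (d + 1) * (q + 1) = (d + 1) * q + (d + 1) := by ring
      rw [this, Function.iterate_add_apply, ih]
      exact actX_period h hw hd s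
  conv_lhs => rw [← Nat.div_add_mod a (d + 1)]
  rw [Nat.add_comm, Function.iterate_add_apply, hNq]

omit h in
lemma mu_mod {μ : ℂ} {d : ℕ} (hμ : μ ^ (d + 1) = 1) {a b : ℕ}
    (hab : a % (d + 1) = b % (d + 1)) : μ ^ a = μ ^ b := by
  have key : ∀ c : ℕ, μ ^ c = μ ^ (c % (d + 1)) := by
    intro c
    conv_lhs => rw [← Nat.div_add_mod c (d + 1)]
    rw [pow_add, pow_mul, hμ, one_pow, one_mul]
  rw [key a, key b, hab]

lemma PP_mem (hw : InMaxSubgroup f w) {d : ℕ} (hd : spow w d = f) {μ : ℂ}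
    (hμ : μ ^ (d + 1) = 1) (v : XS inv f → ℂ) : PP h hw d μ v ∈ Vsub h hw μ := by
  intro s
  rw [PP_apply, PP_apply]
  have hsum : ∑ k ∈ Finset.range (d + 1), μ ^ (d * k) * v ((actX h hw)^[k] (actX h hw s))
      = ∑ k ∈ Finset.range (d + 1), (μ * μ ^ (d * k)) * v ((actX h hw)^[k] s) := by
    have hterm : ∀ k ∈ Finset.range (d + 1),
        μ ^ (d * k) * v ((actX h hw)^[k] (actX h hw s))
        = (μ * μ ^ (d * ((k + 1) % (d + 1)))) * v ((actX h hw)^[(k + 1) % (d + 1)] s) := by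
      intro k hk
      have hit : (actX h hw)^[k] (actX h hw s) = (actX h hw)^[(k + 1) % (d + 1)] s := by
        rw [← Function.iterate_succ_apply, actX_mod h hw hd]
      rw [hit]
      congr 1
      -- μ ^ (d*k) = μ * μ ^ (d * ((k+1) % (d+1)))
      have hme : (d * ((k + 1) % (d + 1)) + 1) % (d + 1) = (d * k) % (d + 1) := by
        have h1 : (k + 1) % (d + 1) ≡ k + 1 [MOD d + 1] := Nat.mod_modEq _ _
        have h2 : d * ((k + 1) % (d + 1)) + 1 ≡ d * (k + 1) + 1 [MOD d + 1] :=
          (h1.mul_left d).add_right 1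
        have h3 : d * (k + 1) + 1 = d * k + (d + 1) := by ring
        have h4 : (d * k + (d + 1)) % (d + 1) = (d * k) % (d + 1) :=
          Nat.add_mod_right _ _
        calc (d * ((k + 1) % (d + 1)) + 1) % (d + 1)
            = (d * (k + 1) + 1) % (d + 1) := h2
          _ = (d * k) % (d + 1) := by rw [h3, h4]
      calc μ ^ (d * k) = μ ^ (d * ((k + 1) % (d + 1)) + 1) := mu_mod hμ hme.symm
        _ = μ * μ ^ (d * ((k + 1) % (d + 1))) := by rw [pow_succ]; ring
    rw [Finset.sum_congr rfl hterm]
    -- now reindex k ↦ (k+1) % (d+1)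
    apply Finset.sum_nbij' (i := fun k => (k + 1) % (d + 1)) (j := fun k => (k + d) % (d + 1))
    · intro a ha
      exact Finset.mem_range.2 (Nat.mod_lt _ (by omega))
    · intro a ha
      exact Finset.mem_range.2 (Nat.mod_lt _ (by omega))
    · intro a ha
      have ha' : a < d + 1 := Finset.mem_range.1 ha
      have h1 : ((a + 1) % (d + 1) + d) % (d + 1) = (a + 1 + d) % (d + 1) :=
        Nat.ModEq.add_right d (Nat.mod_modEq _ _)
      have h2 : (a + 1 + d) % (d + 1) = a % (d + 1) := by
        have : a + 1 + d = a + (d + 1) := by ring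
        rw [this, Nat.add_mod_right]
      rw [h1, h2, Nat.mod_eq_of_lt ha']
    · intro a ha
      have ha' : a < d + 1 := Finset.mem_range.1 ha
      have h1 : ((a + d) % (d + 1) + 1) % (d + 1) = (a + d + 1) % (d + 1) :=
        Nat.ModEq.add_right 1 (Nat.mod_modEq _ _)
      have h2 : (a + d + 1) % (d + 1) = a % (d + 1) := by
        have : a + d + 1 = a + (d + 1) := by ring
        rw [this, Nat.add_mod_right]
      rw [h1, h2, Nat.mod_eq_of_lt ha']
    · intro a ha
      rfl
  rw [hsum]
  have : ∑ k ∈ Finset.range (d + 1), (μ * μ ^ (d * k)) * v ((actX h hw)^[k] s)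
      = μ * ∑ k ∈ Finset.range (d + 1), μ ^ (d * k) * v ((actX h hw)^[k] s) := by
    rw [Finset.mul_sum]
    apply Finset.sum_congr rfl
    intro k _
    ring
  rw [this]
  ring

lemma PP_id (hw : InMaxSubgroup f w) {d : ℕ} {μ : ℂ}
    (hμ : μ ^ (d + 1) = 1) {v : XS inv f → ℂ} (hv : v ∈ Vsub h hw μ) :
    PP h hw d μ v = v := by
  funext s
  rw [PP_apply]
  have hval : ∀ k : ℕ, v ((actX h hw)^[k] s) = μ ^ k * v s := by
    intro k
    induction k with
    | zero => simp
    | succ k ih =>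
      rw [Function.iterate_succ_apply', hv _, ih, pow_succ]
      ring
  have : ∑ k ∈ Finset.range (d + 1), μ ^ (d * k) * v ((actX h hw)^[k] s)
      = ∑ k ∈ Finset.range (d + 1), v s := by
    apply Finset.sum_congr rfl
    intro k _
    rw [hval k, ← mul_assoc, ← pow_add]
    have : d * k + k = (d + 1) * k := by ring
    rw [this, pow_mul, hμ, one_pow, one_mul]
  rw [this, Finset.sum_const, Finset.card_range, nsmul_eq_mul, ← mul_assoc]
  rw [inv_mul_cancel₀ (by exact_mod_cast Nat.succ_ne_zero d), one_mul]

end Rep2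


section Rep3

variable {S : Type*} [Semigroup S] {inv : S → S} [Finite S]
variable (h : IsInverseSemigroup S inv) {w f : S}
include h

noncomputable local instance (f : S) : Fintype (XS inv f) := Fintype.ofFinite _

open Classical in
lemma trace_phiRep (hw : InMaxSubgroup f w) {d : ℕ} (hd : spow w d = f) {μ : ℂ}
    (hμ : μ ^ (d + 1) = 1) (x : S) :
    LinearMap.trace ℂ (Vsub h hw μ) ((phiRep h hw μ) x)
      = ∑ s : XS inv f, (if hc : inv s.1 * ((x * inv x) * s.1) = f then
          ((d + 1 : ℕ) : ℂ)⁻¹ * ∑ k ∈ Finset.range (d + 1), μ ^ (d * k) *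
            (if (actX h hw)^[k] (⟨inv x * s.1, by
                rw [inv_mul h, inv_inv h]
                simp only [mul_assoc] at hc ⊢
                exact hc⟩ : XS inv f) = s then 1 else 0)
        else 0) := by
  -- step 1: trace on V equals trace of (Phi x) ∘ₗ PP on the big space
  have step1 : LinearMap.trace ℂ (Vsub h hw μ) ((phiRep h hw μ) x)
      = LinearMap.trace ℂ (XS inv f → ℂ) ((Phi h f x) ∘ₗ PP h hw d μ) := by
    set V := Vsub h hw μ with hV
    let pr : (XS inv f → ℂ) →ₗ[ℂ] V :=
      (PP h hw d μ).codRestrict V (fun v => PP_mem h hw hd hμ v)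
    have h1 : (Phi h f x) ∘ₗ PP h hw d μ
        = (V.subtype ∘ₗ (phiRep h hw μ x)) ∘ₗ pr := rfl
    have h2 : LinearMap.trace ℂ (XS inv f → ℂ) ((V.subtype ∘ₗ (phiRep h hw μ x)) ∘ₗ pr)
        = LinearMap.trace ℂ V (pr ∘ₗ (V.subtype ∘ₗ (phiRep h hw μ x))) :=
      (LinearMap.trace_comp_comm' _ _).symm
    have h3 : pr ∘ₗ (V.subtype ∘ₗ (phiRep h hw μ x)) = phiRep h hw μ x := by
      apply LinearMap.ext
      intro v
      apply Subtype.ext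
      show PP h hw d μ (((phiRep h hw μ x) v : V) : XS inv f → ℂ) = _
      rw [PP_id h hw hμ ((phiRep h hw μ x) v).2]
    rw [h1, h2, h3]
  rw [step1]
  -- step 2: compute the trace on the function space via the standard basis
  rw [LinearMap.trace_eq_matrix_trace ℂ (Pi.basisFun ℂ (XS inv f))]
  rw [Matrix.trace]
  apply Finset.sum_congr rfl
  intro s _
  rw [Matrix.diag_apply, LinearMap.toMatrix_apply, Pi.basisFun_repr, Pi.basisFun_apply]
  rw [LinearMap.comp_apply, Phi_apply]
  by_cases hc : inv s.1 * ((x * inv x) * s.1) = f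
  · rw [dif_pos hc, dif_pos hc, PP_apply]
    congr 1
    apply Finset.sum_congr rfl
    intro k _
    congr 1
    rw [Pi.single_apply]
  · rw [dif_neg hc, dif_neg hc]

end Rep3


section Rep4

lemma charEq_trace {S : Type*} [Semigroup S] {u w : S} (hch : CharEq u w)
    {V : Type*} [AddCommGroup V] [Module ℂ V] [FiniteDimensional ℂ V]
    (φ : S →ₙ* Module.End ℂ V) :
    LinearMap.trace ℂ V (φ u) = LinearMap.trace ℂ V (φ w) := by
  set n := Module.finrank ℂ V with hn
  let e : V ≃ₗ[ℂ] (Fin n → ℂ) := (Module.finBasis ℂ V).equivFun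
  have hconjmul : ∀ fg : Module.End ℂ V × Module.End ℂ V,
      e.conj (fg.1 * fg.2) = e.conj fg.1 * e.conj fg.2 := by
    rintro ⟨f1, f2⟩
    apply LinearMap.ext
    intro v
    simp only [LinearEquiv.conj_apply, LinearMap.comp_apply, Module.End.mul_apply,
      LinearEquiv.coe_coe, LinearEquiv.symm_apply_apply]
  let ψ : S →ₙ* Module.End ℂ (Fin n → ℂ) :=
    { toFun := fun x => e.conj (φ x)
      map_mul' := by
        intro x y
        show e.conj (φ (x * y)) = e.conj (φ x) * e.conj (φ y)
        rw [map_mul φ x y]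
        exact hconjmul (φ x, φ y) }
  have := hch (Fin n → ℂ) inferInstance inferInstance inferInstance ψ
  have hu' : LinearMap.trace ℂ (Fin n → ℂ) (ψ u) = LinearMap.trace ℂ V (φ u) :=
    LinearMap.trace_conj' (φ u) e
  have hw' : LinearMap.trace ℂ (Fin n → ℂ) (ψ w) = LinearMap.trace ℂ V (φ w) :=
    LinearMap.trace_conj' (φ w) e
  rw [← hu', ← hw', this]

lemma root_sum (N : ℕ) (hN : 0 < N) (m : ℕ) :
    ∑ i ∈ Finset.range N, (Complex.exp (2 * Real.pi * Complex.I / N)) ^ (i * m)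
      = if N ∣ m then (N : ℂ) else 0 := by
  set ζ := Complex.exp (2 * Real.pi * Complex.I / N) with hζ
  have hprim : IsPrimitiveRoot ζ N := Complex.isPrimitiveRoot_exp N hN.ne'
  have hpow : ∀ i : ℕ, ζ ^ (i * m) = (ζ ^ m) ^ i := by
    intro i
    rw [← pow_mul, Nat.mul_comm]
  rw [Finset.sum_congr rfl (fun i _ => hpow i)]
  by_cases hdvd : N ∣ m
  · have h1 : ζ ^ m = 1 := (hprim.pow_eq_one_iff_dvd m).2 hdvd
    rw [if_pos hdvd]
    simp [h1]
  · have h1 : ζ ^ m ≠ 1 := fun hh => hdvd ((hprim.pow_eq_one_iff_dvd m).1 hh)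
    rw [if_neg hdvd, geom_sum_eq h1, ← pow_mul, Nat.mul_comm m N, pow_mul,
      hprim.pow_eq_one, one_pow, sub_self, zero_div]

lemma dvd_iff_mod_one (d k : ℕ) (hk : k < d + 1) :
    (d + 1) ∣ d * k + 1 ↔ k = 1 % (d + 1) := by
  constructor
  · intro hdvd
    have h1 : d * k + 1 ≡ 0 [MOD d + 1] := Nat.modEq_zero_iff_dvd.2 hdvd
    have h2 : k + (d * k + 1) ≡ k + 0 [MOD d + 1] := h1.add_left k
    have h3 : k + (d * k + 1) = (d + 1) * k + 1 := by ring
    have h4 : ((d + 1) * k + 1) % (d + 1) = 1 % (d + 1) := Nat.mul_add_mod _ _ _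
    have h5 : (k + 0) % (d + 1) = k % (d + 1) := by rw [Nat.add_zero]
    have : k % (d + 1) = 1 % (d + 1) := by
      rw [← h5, ← h2, h3, h4]
    rwa [Nat.mod_eq_of_lt hk] at this
  · intro hk1
    subst hk1
    have h1 : d * (1 % (d + 1)) + 1 ≡ d * 1 + 1 [MOD d + 1] :=
      ((Nat.mod_modEq 1 (d + 1)).mul_left d).add_right 1
    have h2 : d * 1 + 1 = d + 1 := by ring
    apply Nat.modEq_zero_iff_dvd.1
    calc d * (1 % (d + 1)) + 1 ≡ d * 1 + 1 [MOD d + 1] := h1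
      _ ≡ 0 [MOD d + 1] := by rw [h2]; exact (Nat.modEq_zero_iff_dvd.2 dvd_rfl)

end Rep4


section Rep5

variable {S : Type*} [Semigroup S] {inv : S → S} [Finite S]
variable (h : IsInverseSemigroup S inv) {w f : S}
include h

noncomputable local instance (f : S) : Fintype (XS inv f) := Fintype.ofFinite _

open Classical in
lemma perS (hw : InMaxSubgroup f w) {d : ℕ} (hd : spow w d = f) (s : XS inv f) (x : S) :
    ∑ i ∈ Finset.range (d + 1),
      (Complex.exp (2 * Real.pi * Complex.I / ((d + 1 : ℕ) : ℂ))) ^ i *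
      (if hc : inv s.1 * ((x * inv x) * s.1) = f then
          ((d + 1 : ℕ) : ℂ)⁻¹ * ∑ k ∈ Finset.range (d + 1),
            ((Complex.exp (2 * Real.pi * Complex.I / ((d + 1 : ℕ) : ℂ))) ^ i) ^ (d * k) *
            (if (actX h hw)^[k] (⟨inv x * s.1, by
                rw [inv_mul h, inv_inv h]
                simp only [mul_assoc] at hc ⊢
                exact hc⟩ : XS inv f) = s then 1 else 0)
        else 0)
    = if (inv s.1 * ((x * inv x) * s.1) = f ∧ inv x * s.1 * w = s.1) then 1 else 0 := by
  set ζ : ℂ := Complex.exp (2 * Real.pi * Complex.I / ((d + 1 : ℕ) : ℂ)) with hζdef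
  by_cases hc : inv s.1 * ((x * inv x) * s.1) = f
  · have hB : inv (inv x * s.1) * (inv x * s.1) = f := by
      rw [inv_mul h, inv_inv h]
      simp only [mul_assoc] at hc ⊢
      exact hc
    set B : XS inv f := ⟨inv x * s.1, hB⟩ with hBdef
    set χ : ℕ → ℂ := fun k => if (actX h hw)^[k] B = s then 1 else 0 with hχdef
    have hstep1 : ∀ i ∈ Finset.range (d + 1),
        ζ ^ i * (if hc : inv s.1 * ((x * inv x) * s.1) = f then
          ((d + 1 : ℕ) : ℂ)⁻¹ * ∑ k ∈ Finset.range (d + 1), (ζ ^ i) ^ (d * k) *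
            (if (actX h hw)^[k] (⟨inv x * s.1, by
                rw [inv_mul h, inv_inv h]
                simp only [mul_assoc] at hc ⊢
                exact hc⟩ : XS inv f) = s then 1 else 0)
        else 0)
        = ((d + 1 : ℕ) : ℂ)⁻¹ * ∑ k ∈ Finset.range (d + 1), ζ ^ (i * (d * k + 1)) * χ k := by
      intro i _
      rw [dif_pos hc, mul_left_comm]
      congr 1
      rw [Finset.mul_sum]
      apply Finset.sum_congr rfl
      intro k _
      show ζ ^ i * ((ζ ^ i) ^ (d * k) * χ k) = _
      rw [← pow_mul, ← mul_assoc, ← pow_add]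
      congr 2
      ring
    rw [Finset.sum_congr rfl hstep1, ← Finset.mul_sum, Finset.sum_comm]
    have hstep2 : ∀ k ∈ Finset.range (d + 1),
        ∑ i ∈ Finset.range (d + 1), ζ ^ (i * (d * k + 1)) * χ k
        = (if (d + 1) ∣ d * k + 1 then ((d + 1 : ℕ) : ℂ) else 0) * χ k := by
      intro k _
      rw [← Finset.sum_mul]
      congr 1
      exact root_sum (d + 1) (by omega) (d * k + 1)
    rw [Finset.sum_congr rfl hstep2]
    have hstep3 : ∑ k ∈ Finset.range (d + 1),
        (if (d + 1) ∣ d * k + 1 then ((d + 1 : ℕ) : ℂ) else 0) * χ k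
        = ((d + 1 : ℕ) : ℂ) * χ (1 % (d + 1)) := by
      rw [Finset.sum_eq_single (1 % (d + 1))]
      · rw [if_pos ((dvd_iff_mod_one d (1 % (d + 1)) (Nat.mod_lt _ (by omega))).2 rfl)]
      · intro k hk hne
        rw [if_neg (fun hdvd => hne ((dvd_iff_mod_one d k (Finset.mem_range.1 hk)).1 hdvd)),
          zero_mul]
      · intro habs
        exact absurd (Finset.mem_range.2 (Nat.mod_lt _ (by omega))) habs
    rw [hstep3, ← mul_assoc, inv_mul_cancel₀ (by exact_mod_cast Nat.succ_ne_zero d), one_mul]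
    -- finally identify χ (1 % (d+1)) with the right-hand side
    have hfix : ((actX h hw)^[1 % (d + 1)] B = s) ↔ (inv x * s.1 * w = s.1) := by
      cases d with
      | zero =>
        have hw_eq_f : w = f := hd
        have haf : (inv x * s.1) * f = inv x * s.1 := by
          have h1 : (inv x * s.1) * (inv (inv x * s.1) * (inv x * s.1))
              = (inv x * s.1) * f := by rw [hB]
          rw [← h1, ← mul_assoc, i1 h]
        have h10 : (1 : ℕ) % (0 + 1) = 0 := rfl
        rw [h10]
        simp only [Function.iterate_zero, id_eq]
        constructor
        · intro hh
          have hv : inv x * s.1 = s.1 := congrArg Subtype.val hh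
          rw [hw_eq_f, haf, hv]
        · intro hh
          rw [hw_eq_f, haf] at hh
          exact Subtype.ext hh
      | succ d' =>
        have h1m : 1 % (d' + 1 + 1) = 1 := Nat.mod_eq_of_lt (by omega)
        rw [h1m]
        simp only [Function.iterate_one]
        rw [show ((actX h hw B = s) ↔ ((actX h hw B).1 = s.1)) from
          ⟨fun hh => by rw [hh], fun hh => Subtype.ext hh⟩]
        rw [actX_val]
    show (if (actX h hw)^[1 % (d + 1)] B = s then (1 : ℂ) else 0) = _
    exact if_congr ⟨fun hf => ⟨hc, hfix.1 hf⟩, fun hcr => hfix.2 hcr.2⟩ rfl rfl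
  · simp only [dif_neg hc, mul_zero, Finset.sum_const_zero]
    rw [if_neg (fun hh => hc hh.1)]

open Classical in
lemma SEP {u w e f : S} (hch : CharEq u w) (hu : InMaxSubgroup e u)
    (hw : InMaxSubgroup f w) :
    ∃ s : S, inv s * s = f ∧ (s * inv s) * e = s * inv s ∧ inv s * u * s = w := by
  obtain ⟨hiu, hui, heiu, hiue⟩ := mxsg_inv h hu
  obtain ⟨hiw, hwi, hfiw, hiwf⟩ := mxsg_inv h hw
  have hfi : f * f = f := by rw [← hiw]; exact inv_mul_idem h w
  have hei : e * e = e := by rw [← hiu]; exact inv_mul_idem h u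
  have hd : spow w (midx w) = f := by
    have h0 := eId_of_mxsg h hw
    rw [← h0]; rfl
  set d := midx w with hddef
  set ζ : ℂ := Complex.exp (2 * Real.pi * Complex.I / ((d + 1 : ℕ) : ℂ)) with hζdef
  have hμ : ∀ i : ℕ, (ζ ^ i) ^ (d + 1) = 1 := by
    intro i
    have hprim : IsPrimitiveRoot ζ (d + 1) := Complex.isPrimitiveRoot_exp _ (by omega)
    rw [← pow_mul, Nat.mul_comm, pow_mul, hprim.pow_eq_one, one_pow]
  have hkey : ∀ x : S,
      ((Finset.univ.filter (fun s : XS inv f =>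
        inv s.1 * ((x * inv x) * s.1) = f ∧ inv x * s.1 * w = s.1)).card : ℂ)
      = ∑ i ∈ Finset.range (d + 1),
        ζ ^ i * (LinearMap.trace ℂ (Vsub h hw (ζ ^ i)) ((phiRep h hw (ζ ^ i)) x)) := by
    intro x
    symm
    have c2 : ∀ i ∈ Finset.range (d + 1),
        ζ ^ i * (LinearMap.trace ℂ (Vsub h hw (ζ ^ i)) ((phiRep h hw (ζ ^ i)) x))
        = ∑ s : XS inv f, ζ ^ i *
          (if hc : inv s.1 * ((x * inv x) * s.1) = f then
            ((d + 1 : ℕ) : ℂ)⁻¹ * ∑ k ∈ Finset.range (d + 1), (ζ ^ i) ^ (d * k) *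
              (if (actX h hw)^[k] (⟨inv x * s.1, by
                  rw [inv_mul h, inv_inv h]
                  simp only [mul_assoc] at hc ⊢
                  exact hc⟩ : XS inv f) = s then 1 else 0)
          else 0) := by
      intro i _
      rw [trace_phiRep h hw hd (hμ i) x, Finset.mul_sum]
    rw [Finset.sum_congr rfl c2, Finset.sum_comm]
    have c3 : ∀ s : XS inv f, s ∈ (Finset.univ : Finset (XS inv f)) →
        (∑ i ∈ Finset.range (d + 1), ζ ^ i *
          (if hc : inv s.1 * ((x * inv x) * s.1) = f then
            ((d + 1 : ℕ) : ℂ)⁻¹ * ∑ k ∈ Finset.range (d + 1), (ζ ^ i) ^ (d * k) *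
              (if (actX h hw)^[k] (⟨inv x * s.1, by
                  rw [inv_mul h, inv_inv h]
                  simp only [mul_assoc] at hc ⊢
                  exact hc⟩ : XS inv f) = s then 1 else 0)
          else 0))
        = (if (inv s.1 * ((x * inv x) * s.1) = f ∧ inv x * s.1 * w = s.1)
            then (1 : ℂ) else 0) :=
      fun s _ => perS h hw hd s x
    rw [Finset.sum_congr rfl c3, Finset.card_filter, Nat.cast_sum]
    apply Finset.sum_congr rfl
    intro s _
    split_ifs <;> simp
  have htra : ∀ i : ℕ,
      LinearMap.trace ℂ (Vsub h hw (ζ ^ i)) ((phiRep h hw (ζ ^ i)) u)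
      = LinearMap.trace ℂ (Vsub h hw (ζ ^ i)) ((phiRep h hw (ζ ^ i)) w) :=
    fun i => charEq_trace hch (phiRep h hw (ζ ^ i))
  have hTuw : (Finset.univ.filter (fun s : XS inv f =>
        inv s.1 * ((u * inv u) * s.1) = f ∧ inv u * s.1 * w = s.1)).card
      = (Finset.univ.filter (fun s : XS inv f =>
        inv s.1 * ((w * inv w) * s.1) = f ∧ inv w * s.1 * w = s.1)).card := by
    have hc : ((Finset.univ.filter (fun s : XS inv f =>
        inv s.1 * ((u * inv u) * s.1) = f ∧ inv u * s.1 * w = s.1)).card : ℂ)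
        = ((Finset.univ.filter (fun s : XS inv f =>
        inv s.1 * ((w * inv w) * s.1) = f ∧ inv w * s.1 * w = s.1)).card : ℂ) := by
      rw [hkey u, hkey w]
      exact Finset.sum_congr rfl (fun i _ => by rw [htra i])
    exact_mod_cast hc
  have hTw : 0 < (Finset.univ.filter (fun s : XS inv f =>
      inv s.1 * ((w * inv w) * s.1) = f ∧ inv w * s.1 * w = s.1)).card := by
    rw [Finset.card_pos]
    refine ⟨⟨f, by rw [inv_idem h hfi]; exact hfi⟩, ?_⟩
    rw [Finset.mem_filter]
    refine ⟨Finset.mem_univ _, ?_, ?_⟩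
    · show inv f * ((w * inv w) * f) = f
      rw [inv_idem h hfi, hwi, hfi, hfi]
    · show inv w * f * w = f
      rw [hiwf, hiw]
  have hTu : 0 < (Finset.univ.filter (fun s : XS inv f =>
      inv s.1 * ((u * inv u) * s.1) = f ∧ inv u * s.1 * w = s.1)).card := by
    rw [hTuw]; exact hTw
  rw [Finset.card_pos] at hTu
  obtain ⟨s, hs⟩ := hTu
  rw [Finset.mem_filter] at hs
  obtain ⟨-, hcond, hfix⟩ := hs
  -- derive the conclusions
  have hsf : s.1 * f = s.1 := by
    have h1 : s.1 * (inv s.1 * s.1) = s.1 * f := by rw [s.2]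
    rw [← h1, ← mul_assoc, i1 h]
  have h1 : inv u * s.1 = s.1 * inv w := by
    calc inv u * s.1 = inv u * (s.1 * f) := by rw [hsf]
      _ = inv u * (s.1 * (w * inv w)) := by rw [hwi]
      _ = (inv u * s.1 * w) * inv w := by simp only [mul_assoc]
      _ = s.1 * inv w := by rw [hfix]
  have h2 : inv s.1 * u * s.1 = w := by
    have h2a : inv s.1 * u = w * inv s.1 := by
      have hcg := congrArg inv h1
      rw [inv_mul h, inv_mul h, inv_inv h, inv_inv h] at hcg
      exact hcg
    rw [h2a, mul_assoc, s.2]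
    exact hw.2.1
  have h3 : (s.1 * inv s.1) * e = s.1 * inv s.1 := by
    have hc' : inv s.1 * (e * s.1) = f := by
      rw [← hui]; exact hcond
    have hpep : (s.1 * inv s.1) * e * (s.1 * inv s.1) = s.1 * inv s.1 := by
      calc (s.1 * inv s.1) * e * (s.1 * inv s.1)
          = s.1 * (inv s.1 * (e * s.1)) * inv s.1 := by simp only [mul_assoc]
        _ = s.1 * f * inv s.1 := by rw [hc']
        _ = s.1 * inv s.1 := by rw [hsf]
    have hpi : (s.1 * inv s.1) * (s.1 * inv s.1) = s.1 * inv s.1 := mul_inv_idem h s.1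
    have comm : (s.1 * inv s.1) * e = e * (s.1 * inv s.1) := idem_comm h hpi hei
    calc (s.1 * inv s.1) * e = ((s.1 * inv s.1) * (s.1 * inv s.1)) * e := by rw [hpi]
      _ = (s.1 * inv s.1) * ((s.1 * inv s.1) * e) := by simp only [mul_assoc]
      _ = (s.1 * inv s.1) * (e * (s.1 * inv s.1)) := by rw [comm]
      _ = (s.1 * inv s.1) * e * (s.1 * inv s.1) := by simp only [mul_assoc]
      _ = s.1 * inv s.1 := hpep
  exact ⟨s.1, s.2, h3, h2⟩


end Rep5


section Final

variable {S : Type*} [Semigroup S] {inv : S → S}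

lemma primConj_charEq {x y : S} (hp : PrimConj x y) : CharEq x y := by
  intro V _ _ _ φ
  obtain ⟨u, v, hx, hy⟩ := hp
  set φ' : WithOne S →* Module.End ℂ V := WithOne.lift φ with hφ'
  have hφ : ∀ z : S, φ z = φ' (z : WithOne S) := fun z => (WithOne.lift_coe φ z).symm
  calc LinearMap.trace ℂ V (φ x) = LinearMap.trace ℂ V (φ' (x : WithOne S)) := by rw [hφ]
    _ = LinearMap.trace ℂ V (φ' u * φ' v) := by rw [hx, map_mul]
    _ = LinearMap.trace ℂ V (φ' v * φ' u) := LinearMap.trace_mul_comm ℂ _ _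
    _ = LinearMap.trace ℂ V (φ' (y : WithOne S)) := by rw [← map_mul, ← hy]
    _ = LinearMap.trace ℂ V (φ y) := by rw [hφ]

lemma charEq_trans {x y z : S} (h1 : CharEq x y) (h2 : CharEq y z) : CharEq x z :=
  fun V i1 i2 i3 φ => (h1 V i1 i2 i3 φ).trans (h2 V i1 i2 i3 φ)

lemma charEq_symm {x y : S} (h1 : CharEq x y) : CharEq y x :=
  fun V i1 i2 i3 φ => (h1 V i1 i2 i3 φ).symm

lemma sgConj_charEq {x y : S} (hs : SgConj x y) : CharEq x y := by
  induction hs with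
  | single hp => exact primConj_charEq hp
  | tail _ hp ih => exact charEq_trans ih (primConj_charEq hp)

variable [Finite S] (h : IsInverseSemigroup S inv)
include h

lemma charEq_to_GC {a b : S} (hch : CharEq a b) :
    ∃ r : S, r * inv r = eId a ∧ inv r * r = eId b ∧ inv r * gP a * r = gP b := by
  have hga : InMaxSubgroup (eId a) (gP a) := mxsg_gP a
  have hgb : InMaxSubgroup (eId b) (gP b) := mxsg_gP b
  have hch1 : CharEq (gP a) (gP b) :=
    charEq_trans (charEq_trans (charEq_symm (sgConj_charEq (sgConj_gP h a))) hch)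
      (sgConj_charEq (sgConj_gP h b))
  obtain ⟨s1, hs1f, hs1p, hs1c⟩ := SEP h hch1 hga hgb
  obtain ⟨s2, hs2f, hs2p, hs2c⟩ := SEP h (charEq_symm hch1) hgb hga
  have hei : eId a * eId a = eId a := eId_idem a
  have hfi : eId b * eId b = eId b := eId_idem b
  -- q := s2 * inv s2 satisfies q * eId b = q
  have hqi : (s2 * inv s2) * (s2 * inv s2) = s2 * inv s2 := mul_inv_idem h s2
  have hfq : eId b * (s2 * inv s2) = s2 * inv s2 := by
    rw [idem_comm h hfi hqi]; exact hs2p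
  have hfs2 : eId b * s2 = s2 := by
    calc eId b * s2 = eId b * (s2 * inv s2 * s2) := by rw [i1 h]
      _ = (eId b * (s2 * inv s2)) * s2 := by simp only [mul_assoc]
      _ = (s2 * inv s2) * s2 := by rw [hfq]
      _ = s2 := i1 h s2
  have ht1 : inv (s1 * s2) * (s1 * s2) = eId a := by
    rw [inv_mul h]
    calc inv s2 * inv s1 * (s1 * s2) = inv s2 * ((inv s1 * s1) * s2) := by
          simp only [mul_assoc]
      _ = inv s2 * s2 := by rw [hs1f, hfs2]
      _ = eId a := hs2f
  have ht2 : (s1 * s2) * inv (s1 * s2) = s1 * (s2 * inv s2) * inv s1 := by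
    rw [inv_mul h]; simp only [mul_assoc]
  have ht3 : ((s1 * s2) * inv (s1 * s2)) * eId a = (s1 * s2) * inv (s1 * s2) := by
    rw [ht2]
    have hr'p : (s1 * (s2 * inv s2) * inv s1) * (s1 * inv s1)
        = s1 * (s2 * inv s2) * inv s1 := by
      calc (s1 * (s2 * inv s2) * inv s1) * (s1 * inv s1)
          = s1 * ((s2 * inv s2) * (inv s1 * s1)) * inv s1 := by simp only [mul_assoc]
        _ = s1 * ((s2 * inv s2) * eId b) * inv s1 := by rw [hs1f]
        _ = s1 * (s2 * inv s2) * inv s1 := by rw [hs2p, mul_assoc]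
    calc (s1 * (s2 * inv s2) * inv s1) * eId a
        = ((s1 * (s2 * inv s2) * inv s1) * (s1 * inv s1)) * eId a := by rw [hr'p]
      _ = (s1 * (s2 * inv s2) * inv s1) * ((s1 * inv s1) * eId a) := by
          simp only [mul_assoc]
      _ = (s1 * (s2 * inv s2) * inv s1) * (s1 * inv s1) := by rw [hs1p]
      _ = s1 * (s2 * inv s2) * inv s1 := hr'p
  have hdom := dom_eq h ht1 ht3
  -- hdom : (s1*s2) * inv (s1*s2) = eId a
  have hre : s1 * (s2 * inv s2) * inv s1 = eId a := by rw [← ht2, hdom]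
  -- now p := s1 * inv s1 equals eId a
  have hpi : (s1 * inv s1) * (s1 * inv s1) = s1 * inv s1 := mul_inv_idem h s1
  have hep : eId a * (s1 * inv s1) = eId a := by
    rw [← hre]
    calc (s1 * (s2 * inv s2) * inv s1) * (s1 * inv s1)
        = s1 * ((s2 * inv s2) * (inv s1 * s1)) * inv s1 := by simp only [mul_assoc]
      _ = s1 * ((s2 * inv s2) * eId b) * inv s1 := by rw [hs1f]
      _ = s1 * (s2 * inv s2) * inv s1 := by rw [hs2p, mul_assoc]
  have hp_eq : s1 * inv s1 = eId a := by
    rw [← hs1p, idem_comm h hpi hei, hep]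
  exact ⟨s1, hp_eq, hs1f, hs1c⟩

lemma GC_to_sgConj {a b : S}
    (hgc : ∃ r : S, r * inv r = eId a ∧ inv r * r = eId b ∧ inv r * gP a * r = gP b) :
    SgConj a b := by
  obtain ⟨r, hr1, hr2, hr3⟩ := hgc
  have step : PrimConj (gP a) (gP b) := by
    have := primConj_conjugate h (u := gP a) (r := r) (e := eId a) (gP_mul_eId a) hr1
    rwa [hr3] at this
  exact Relation.TransGen.trans (sgConj_gP h a)
    (Relation.TransGen.trans (Relation.TransGen.single step)
      (sgConj_symm (sgConj_gP h b)))

lemma GC_to_actConj {a b : S}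
    (hgc : ∃ r : S, r * inv r = eId a ∧ inv r * r = eId b ∧ inv r * gP a * r = gP b) :
    ActConj inv a b := by
  obtain ⟨r, hr1, hr2, hr3⟩ := hgc
  have step : ActsTo inv ((inv r : S) : WithOne S) (gP a) (gP b) := by
    refine actsTo_coe h (e := eId a) ⟨0, mxsg_gP a⟩ (eId_idem a) ?_ ?_
    · rw [inv_inv h, hr1]; exact eId_idem a
    · rw [inv_inv h]; exact hr3
  exact Relation.TransGen.trans (actConj_gP h a)
    (Relation.TransGen.trans (Relation.TransGen.single ⟨_, Or.inl step⟩)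
      (actConj_symm h (actConj_gP h b)))

lemma actsTo_sgConj {a : WithOne S} {x y : S} (hat : ActsTo inv a x y) : SgConj x y := by
  obtain ⟨⟨e', hIs, hge⟩, hval⟩ := hat
  by_cases ha : a = (1 : WithOne S)
  · subst ha
    rw [inv1_one, mul_one, one_mul, WithOne.coe_inj] at hval
    rw [hval]
    exact Relation.TransGen.single (primConj_refl x)
  · obtain ⟨t, rfl⟩ := WithOne.ne_one_iff_exists.1 ha
    rw [inv1_coe, ← WithOne.coe_mul, ← WithOne.coe_mul, WithOne.coe_inj] at hval
    -- hval : y = t * x * inv t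
    have he' : e' = eId x := eId_unique h hIs
    subst he'
    rw [inv1_coe, ← WithOne.coe_mul] at hge
    obtain ⟨fo, hfo, hge2⟩ := hge
    have hq : (inv t * t) * eId x = eId x := by
      by_cases hfo1 : fo = (1 : WithOne S)
      · subst hfo1
        rw [mul_one, WithOne.coe_inj] at hge2
        rw [hge2]
        exact inv_mul_idem h t
      · obtain ⟨g, rfl⟩ := WithOne.ne_one_iff_exists.1 hfo1
        rw [← WithOne.coe_mul, WithOne.coe_inj] at hge2
        rw [hge2]
        calc (inv t * t) * (inv t * t * g) = ((inv t * t) * (inv t * t)) * g := by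
              simp only [mul_assoc]
          _ = (inv t * t) * g := by rw [inv_mul_idem h t]
    have step1 : PrimConj y (x * (inv t * t)) := by
      refine primConj_of_eq (u := t) (v := x * inv t) ?_ ?_
      · rw [← mul_assoc, ← hval]
      · rw [mul_assoc]
    have step2 : SgConj (x * (inv t * t)) x :=
      sgConj_mul_idem_right h (inv_mul_idem h t) hq
    exact sgConj_symm (Relation.TransGen.trans (Relation.TransGen.single step1) step2)

lemma actConj_sgConj {x y : S} (hac : ActConj inv x y) : SgConj x y := by
  induction hac with
  | single hp =>
    obtain ⟨a, hc⟩ := hp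
    rcases hc with hc | hc
    · exact actsTo_sgConj h hc
    · exact sgConj_symm (actsTo_sgConj h hc)
  | tail _ hp ih =>
    obtain ⟨a, hc⟩ := hp
    rcases hc with hc | hc
    · exact Relation.TransGen.trans ih (actsTo_sgConj h hc)
    · exact Relation.TransGen.trans ih (sgConj_symm (actsTo_sgConj h hc))

end Final

/-- Corollary 2 (statement 4): in a finite inverse semigroup, `a ∼ b` iff
`a ≈ b` iff `a ≡ b`. -/
theorem conj_iff_actConj_iff_charEq_of_finite_inverse {S : Type*} [Semigroup S]
    [Finite S] (inv : S → S) (hinv : IsInverseSemigroup S inv) (a b : S) :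
    (SgConj a b ↔ ActConj inv a b) ∧ (SgConj a b ↔ CharEq a b) := by
  constructor
  · constructor
    · intro hs
      exact GC_to_actConj hinv (charEq_to_GC hinv (sgConj_charEq hs))
    · intro hac
      exact actConj_sgConj hinv hac
  · constructor
    · intro hs
      exact sgConj_charEq hs
    · intro hch
      exact GC_to_sgConj hinv (charEq_to_GC hinv hch)

end SgConjPaper
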